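/- Let g : [0,∞) → ℝ and f : ℝ × ℝ → ℝ be measurable functions such that t ↦ f(t, g(t)) is locally integrable. Suppose that for all 0 ≤ s ≤ t we have g(t) - g(s) ≤ ∫_s^t f(u, g(u)) du, and that there exists M ∈ ℝ such that f(u, g(u)) ≤ 0 whenever g(u) ≥ M. Then g(t) ≤ max(g(0), M) for all t ≥ 0. -/
import Mathlib

open MeasureTheory

/-- Gronwall-type comparison lemma: if `g(t) - g(s) ≤ ∫_s^t f(u, g(u)) du` for all
`0 ≤ s ≤ t`, `t ↦ f(t, g(t))` is locally integrable on `[0,∞)`, and `f(u, g(u)) ≤ 0`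
whenever `g(u) ≥ M` (for `u ≥ 0`), then `g(t) ≤ max (g 0) M` for all `t ≥ 0`. -/
theorem stmt_0 (g : ℝ → ℝ) (f : ℝ → ℝ → ℝ) (M : ℝ)
    (hg : Measurable g) (hf : Measurable (Function.uncurry f))
    (hloc : LocallyIntegrableOn (fun u => f u (g u)) (Set.Ici (0 : ℝ)))
    (hineq : ∀ s t : ℝ, 0 ≤ s → s ≤ t → g t - g s ≤ ∫ u in s..t, f u (g u))
    (hdrift : ∀ u : ℝ, 0 ≤ u → M ≤ g u → f u (g u) ≤ 0) :
    ∀ t : ℝ, 0 ≤ t → g t ≤ max (g 0) M := by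
  intro t ht
  by_contra hcon
  push_neg at hcon
  set K := max (g 0) M with hK
  have hg0K : g 0 ≤ K := le_max_left _ _
  have hMK : M ≤ K := le_max_right _ _
  have hInt : IntegrableOn (fun u => f u (g u)) (Set.Icc 0 t) :=
    hloc.integrableOn_compact_subset Set.Icc_subset_Ici_self isCompact_Icc
  have huIcc : Set.uIcc (0:ℝ) t = Set.Icc 0 t := Set.uIcc_of_le ht
  have hII : IntervalIntegrable (fun u => f u (g u)) volume 0 t := by
    rw [intervalIntegrable_iff_integrableOn_Ioc_of_le ht]
    exact hInt.mono_set Set.Ioc_subset_Icc_self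
  have hIIsub : ∀ a b : ℝ, 0 ≤ a → a ≤ b → b ≤ t →
      IntervalIntegrable (fun u => f u (g u)) volume a b := by
    intro a b ha hab hbt
    rw [intervalIntegrable_iff_integrableOn_Ioc_of_le hab]
    exact hInt.mono_set (fun x hx => ⟨le_trans ha hx.1.le, le_trans hx.2 hbt⟩)
  -- the set of "bad times"
  set S : Set ℝ := insert (0:ℝ) {u | u ∈ Set.Ioc (0:ℝ) t ∧ g u < M} with hSdef
  have hS0 : (0:ℝ) ∈ S := Set.mem_insert _ _
  have hSne : S.Nonempty := ⟨0, hS0⟩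
  have hSub : ∀ x ∈ S, x ≤ t := by
    rintro x (rfl | ⟨hx, _⟩)
    exacts [ht, hx.2]
  have hSbdd : BddAbove S := ⟨t, hSub⟩
  set s₀ := sSup S with hs₀def
  have hs₀0 : 0 ≤ s₀ := le_csSup hSbdd hS0
  have hs₀t : s₀ ≤ t := csSup_le hSne hSub
  have hA : ∀ u ∈ Set.Ioc s₀ t, M ≤ g u := by
    intro u hu
    by_contra h
    push_neg at h
    have : u ∈ S := Or.inr ⟨⟨lt_of_le_of_lt hs₀0 hu.1, hu.2⟩, h⟩
    exact absurd (le_csSup hSbdd this) (not_le.mpr hu.1)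
  have hint2 : ∫ u in s₀..t, f u (g u) ≤ 0 := by
    rw [intervalIntegral.integral_of_le hs₀t]
    apply setIntegral_nonpos measurableSet_Ioc
    intro u hu
    exact hdrift u (le_trans hs₀0 hu.1.le) (hA u hu)
  -- continuity of the primitive
  set Φ : ℝ → ℝ := fun x => ∫ u in (0:ℝ)..x, f u (g u) with hΦdef
  have hΦcont : ContinuousOn Φ (Set.Icc 0 t) := by
    have := intervalIntegral.continuousOn_primitive_interval' hII
      (by rw [huIcc]; exact Set.left_mem_Icc.mpr ht)
    rwa [huIcc] at this
  have hs₀mem : s₀ ∈ Set.Icc 0 t := ⟨hs₀0, hs₀t⟩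
  have hε : 0 < g t - K := sub_pos.mpr hcon
  have hcw : ContinuousWithinAt Φ (Set.Icc 0 t) s₀ := hΦcont s₀ hs₀mem
  have hev : ∀ᶠ x in nhdsWithin s₀ (Set.Icc 0 t), |Φ x - Φ s₀| < g t - K := by
    have := Metric.tendsto_nhds.mp hcw (g t - K) hε
    filter_upwards [this] with x hx
    simpa [Real.dist_eq] using hx
  obtain ⟨δ, hδpos, hδ⟩ := Metric.mem_nhdsWithin_iff.mp hev
  -- pick u ∈ S close to s₀
  obtain ⟨u, huS, hu_lt⟩ := exists_lt_of_lt_csSup hSne (by linarith : s₀ - δ < s₀)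
  have hu0 : 0 ≤ u := by
    rcases huS with rfl | ⟨hu, _⟩
    exacts [le_refl 0, hu.1.le]
  have hus₀ : u ≤ s₀ := le_csSup hSbdd huS
  have huK : g u ≤ K := by
    rcases huS with rfl | ⟨_, hu⟩
    exacts [hg0K, le_trans hu.le hMK]
  have hudist : dist u s₀ < δ := by
    rw [Real.dist_eq, abs_sub_lt_iff]
    constructor <;> linarith
  have humem : u ∈ Set.Icc 0 t := ⟨hu0, le_trans hus₀ hs₀t⟩
  have hΦclose : |Φ u - Φ s₀| < g t - K := hδ ⟨hudist, humem⟩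
  -- split the integral
  have hsplit : (∫ x in u..s₀, f x (g x)) + ∫ x in s₀..t, f x (g x)
      = ∫ x in u..t, f x (g x) :=
    intervalIntegral.integral_add_adjacent_intervals
      (hIIsub u s₀ hu0 hus₀ hs₀t) (hIIsub s₀ t hs₀0 hs₀t le_rfl)
  have hmid : (∫ x in u..s₀, f x (g x)) = Φ s₀ - Φ u := by
    rw [hΦdef]
    simp only
    rw [eq_sub_iff_add_eq, add_comm]
    exact intervalIntegral.integral_add_adjacent_intervals
      (hIIsub 0 u le_rfl hu0 (le_trans hus₀ hs₀t)) (hIIsub u s₀ hu0 hus₀ hs₀t)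
  have hmain : g t - g u ≤ ∫ x in u..t, f x (g x) := hineq u t hu0 (le_trans hus₀ hs₀t)
  have : g t ≤ g u + (Φ s₀ - Φ u) := by
    rw [← hmid]
    linarith [hsplit, hint2, hmain]
  have h1 : Φ s₀ - Φ u < g t - K := lt_of_le_of_lt (le_abs_self _) (by rwa [abs_sub_comm] at hΦclose)
  linarith
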